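/- Let k be a field, let u, v ∈ k be nonzero, and set f(u,v) = (u⁴−1)(v⁴−1)(u²−v²)(u²v²−1). The six points of ℙ²(k) with coordinate triples (u²,u,1), (u^{−2},u^{−1},1), (v²,v,1), (v^{−2},v^{−1},1), (1,0,0), (0,1,0) are in general position if and only if f(u,v) ≠ 0. -/

import Mathlib

/-- Six points of the projective plane given by coordinate triples are *in general position* if:
they are pairwise distinct as projective points (no two triples are proportional), no three of
them lie on a line (no nonzero linear form vanishes at three of the triples), and the six do not
all lie on a conic (no nonzero quadratic form vanishes at all six triples). -/
def InGeneralPosition6 {k : Type*} [Field k] (P : Fin 6 → Fin 3 → k) : Prop :=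
  (∀ i j : Fin 6, i ≠ j → ¬∃ c : k, c ≠ 0 ∧ P j = c • P i) ∧
  (∀ i j l : Fin 6, i ≠ j → i ≠ l → j ≠ l →
    ¬∃ α β γ : k, (α, β, γ) ≠ (0, 0, 0) ∧
      ∀ m ∈ ({i, j, l} : Set (Fin 6)), α * P m 0 + β * P m 1 + γ * P m 2 = 0) ∧
  ¬∃ a b c d e f : k, (a, b, c, d, e, f) ≠ (0, 0, 0, 0, 0, 0) ∧
    ∀ m : Fin 6,
      a * P m 0 ^ 2 + b * P m 1 ^ 2 + c * P m 2 ^ 2 +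
        d * (P m 0 * P m 1) + e * (P m 0 * P m 2) + f * (P m 1 * P m 2) = 0

/-- The six coordinate triples `(u²,u,1), (u⁻²,u⁻¹,1), (v²,v,1), (v⁻²,v⁻¹,1), (1,0,0), (0,1,0)`. -/
def sixTriples {k : Type*} [Field k] (u v : k) : Fin 6 → Fin 3 → k :=
  ![![u ^ 2, u, 1], ![(u ^ 2)⁻¹, u⁻¹, 1], ![v ^ 2, v, 1], ![(v ^ 2)⁻¹, v⁻¹, 1],
    ![1, 0, 0], ![0, 1, 0]]


set_option maxHeartbeats 4000000

theorem cramer3 {k : Type*} [Field k] (a b c d e f g h i α β γ : k)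
    (hdet : a * (e * i - f * h) - b * (d * i - f * g) + c * (d * h - e * g) ≠ 0)
    (E1 : α * a + β * b + γ * c = 0) (E2 : α * d + β * e + γ * f = 0)
    (E3 : α * g + β * h + γ * i = 0) : α = 0 ∧ β = 0 ∧ γ = 0 := by
  have hα : α * (a * (e * i - f * h) - b * (d * i - f * g) + c * (d * h - e * g)) = 0 := by
    linear_combination (e * i - f * h) * E1 - (b * i - c * h) * E2 + (b * f - c * e) * E3
  have hβ : β * (a * (e * i - f * h) - b * (d * i - f * g) + c * (d * h - e * g)) = 0 := by
    linear_combination (f * g - d * i) * E1 + (a * i - c * g) * E2 + (c * d - a * f) * E3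
  have hγ : γ * (a * (e * i - f * h) - b * (d * i - f * g) + c * (d * h - e * g)) = 0 := by
    linear_combination (d * h - e * g) * E1 - (a * h - b * g) * E2 + (a * e - b * d) * E3
  exact ⟨(mul_eq_zero.mp hα).resolve_right hdet,
         (mul_eq_zero.mp hβ).resolve_right hdet,
         (mul_eq_zero.mp hγ).resolve_right hdet⟩

theorem keyLine {k : Type*} [Field k] (u v : k) (hu : u ≠ 0) (hv : v ≠ 0)
    (h1 : u ^ 2 - 1 ≠ 0) (h2 : u ^ 2 + 1 ≠ 0) (h3 : v ^ 2 - 1 ≠ 0) (h4 : v ^ 2 + 1 ≠ 0)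
    (h5 : u - v ≠ 0) (h6 : u + v ≠ 0) (h7 : u * v - 1 ≠ 0) (h8 : u * v + 1 ≠ 0)
    (α β γ : k) (i j l : Fin 6) (hij : i < j) (hjl : j < l)
    (Ei : α * sixTriples u v i 0 + β * sixTriples u v i 1 + γ * sixTriples u v i 2 = 0)
    (Ej : α * sixTriples u v j 0 + β * sixTriples u v j 1 + γ * sixTriples u v j 2 = 0)
    (El : α * sixTriples u v l 0 + β * sixTriples u v l 1 + γ * sixTriples u v l 2 = 0) :
    α = 0 ∧ β = 0 ∧ γ = 0 := by
  fin_cases i <;> fin_cases j <;> fin_cases l <;>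
    first
      | exact absurd hij (by decide)
      | exact absurd hjl (by decide)
      | skip
  · -- (0, 1, 2)
    have A : α * u ^ 2 + β * u + γ * 1 = 0 := Ei
    have B : α * (u ^ 2)⁻¹ + β * u⁻¹ + γ * 1 = 0 := Ej
    have Cc : α * v ^ 2 + β * v + γ * 1 = 0 := El
    field_simp at B
    exact cramer3 _ _ _ _ _ _ _ _ _ α β γ
      (show u^2 * (u^2 * 1 - u^3 * v) - u * (u * 1 - u^3 * v^2) + 1 * (u * v - u^2 * v^2) ≠ 0 by
        rw [show u^2 * (u^2 * 1 - u^3 * v) - u * (u * 1 - u^3 * v^2) + 1 * (u * v - u^2 * v^2) = -((u^2-1) * ((u-v) * ((u*v-1) * (u)))) from by ring]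
        exact neg_ne_zero.mpr (mul_ne_zero h1 (mul_ne_zero h5 (mul_ne_zero h7 (hu)))))
      (by first | linear_combination A | linear_combination -A) (by first | linear_combination u * B | linear_combination -B) (by first | linear_combination Cc | linear_combination -Cc)
  · -- (0, 1, 3)
    have A : α * u ^ 2 + β * u + γ * 1 = 0 := Ei
    have B : α * (u ^ 2)⁻¹ + β * u⁻¹ + γ * 1 = 0 := Ej
    have Cc : α * (v ^ 2)⁻¹ + β * v⁻¹ + γ * 1 = 0 := El
    field_simp at B Cc
    exact cramer3 _ _ _ _ _ _ _ _ _ α β γ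
      (show u^2 * (u^2 * v^3 - u^3 * v^2) - u * (u * v^3 - u^3 * v) + 1 * (u * v^2 - u^2 * v) ≠ 0 by
        rw [show u^2 * (u^2 * v^3 - u^3 * v^2) - u * (u * v^3 - u^3 * v) + 1 * (u * v^2 - u^2 * v) = -((u^2-1) * ((u-v) * ((u*v-1) * (u * (v))))) from by ring]
        exact neg_ne_zero.mpr (mul_ne_zero h1 (mul_ne_zero h5 (mul_ne_zero h7 (mul_ne_zero hu (hv))))))
      (by first | linear_combination A | linear_combination -A) (by first | linear_combination u * B | linear_combination -B) (by first | linear_combination v * Cc | linear_combination -Cc)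
  · -- (0, 1, 4)
    have A : α * u ^ 2 + β * u + γ * 1 = 0 := Ei
    have B : α * (u ^ 2)⁻¹ + β * u⁻¹ + γ * 1 = 0 := Ej
    have Cc : α * 1 + β * 0 + γ * 0 = 0 := El
    field_simp at B
    exact cramer3 _ _ _ _ _ _ _ _ _ α β γ
      (show u^2 * (u^2 * 0 - u^3 * 0) - u * (u * 0 - u^3 * 1) + 1 * (u * 0 - u^2 * 1) ≠ 0 by
        rw [show u^2 * (u^2 * 0 - u^3 * 0) - u * (u * 0 - u^3 * 1) + 1 * (u * 0 - u^2 * 1) = (u * ((u^2-1) * (u))) from by ring]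
        exact mul_ne_zero hu (mul_ne_zero h1 (hu)))
      (by first | linear_combination A | linear_combination -A) (by first | linear_combination u * B | linear_combination -B) (by first | linear_combination Cc | linear_combination -Cc)
  · -- (0, 1, 5)
    have A : α * u ^ 2 + β * u + γ * 1 = 0 := Ei
    have B : α * (u ^ 2)⁻¹ + β * u⁻¹ + γ * 1 = 0 := Ej
    have Cc : α * 0 + β * 1 + γ * 0 = 0 := El
    field_simp at B
    exact cramer3 _ _ _ _ _ _ _ _ _ α β γ
      (show u^2 * (u^2 * 0 - u^3 * 1) - u * (u * 0 - u^3 * 0) + 1 * (u * 1 - u^2 * 0) ≠ 0 by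
        rw [show u^2 * (u^2 * 0 - u^3 * 1) - u * (u * 0 - u^3 * 0) + 1 * (u * 1 - u^2 * 0) = -((u^2-1) * ((u^2+1) * (u))) from by ring]
        exact neg_ne_zero.mpr (mul_ne_zero h1 (mul_ne_zero h2 (hu))))
      (by first | linear_combination A | linear_combination -A) (by first | linear_combination u * B | linear_combination -B) (by first | linear_combination Cc | linear_combination -Cc)
  · -- (0, 2, 3)
    have A : α * u ^ 2 + β * u + γ * 1 = 0 := Ei
    have B : α * v ^ 2 + β * v + γ * 1 = 0 := Ej
    have Cc : α * (v ^ 2)⁻¹ + β * v⁻¹ + γ * 1 = 0 := El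
    field_simp at Cc
    exact cramer3 _ _ _ _ _ _ _ _ _ α β γ
      (show u^2 * (v * v^3 - 1 * v^2) - u * (v^2 * v^3 - 1 * v) + 1 * (v^2 * v^2 - v * v) ≠ 0 by
        rw [show u^2 * (v * v^3 - 1 * v^2) - u * (v^2 * v^3 - 1 * v) + 1 * (v^2 * v^2 - v * v) = ((u-v) * ((u*v-1) * ((v^2-1) * (v)))) from by ring]
        exact mul_ne_zero h5 (mul_ne_zero h7 (mul_ne_zero h3 (hv))))
      (by first | linear_combination A | linear_combination -A) (by first | linear_combination B | linear_combination -B) (by first | linear_combination v * Cc | linear_combination -Cc)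
  · -- (0, 2, 4)
    have A : α * u ^ 2 + β * u + γ * 1 = 0 := Ei
    have B : α * v ^ 2 + β * v + γ * 1 = 0 := Ej
    have Cc : α * 1 + β * 0 + γ * 0 = 0 := El
    exact cramer3 _ _ _ _ _ _ _ _ _ α β γ
      (show u^2 * (v * 0 - 1 * 0) - u * (v^2 * 0 - 1 * 1) + 1 * (v^2 * 0 - v * 1) ≠ 0 by
        rw [show u^2 * (v * 0 - 1 * 0) - u * (v^2 * 0 - 1 * 1) + 1 * (v^2 * 0 - v * 1) = ((u-v)) from by ring]
        exact h5)
      (by first | linear_combination A | linear_combination -A) (by first | linear_combination B | linear_combination -B) (by first | linear_combination Cc | linear_combination -Cc)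
  · -- (0, 2, 5)
    have A : α * u ^ 2 + β * u + γ * 1 = 0 := Ei
    have B : α * v ^ 2 + β * v + γ * 1 = 0 := Ej
    have Cc : α * 0 + β * 1 + γ * 0 = 0 := El
    exact cramer3 _ _ _ _ _ _ _ _ _ α β γ
      (show u^2 * (v * 0 - 1 * 1) - u * (v^2 * 0 - 1 * 0) + 1 * (v^2 * 1 - v * 0) ≠ 0 by
        rw [show u^2 * (v * 0 - 1 * 1) - u * (v^2 * 0 - 1 * 0) + 1 * (v^2 * 1 - v * 0) = -((u-v) * ((u+v))) from by ring]
        exact neg_ne_zero.mpr (mul_ne_zero h5 (h6)))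
      (by first | linear_combination A | linear_combination -A) (by first | linear_combination B | linear_combination -B) (by first | linear_combination Cc | linear_combination -Cc)
  · -- (0, 3, 4)
    have A : α * u ^ 2 + β * u + γ * 1 = 0 := Ei
    have B : α * (v ^ 2)⁻¹ + β * v⁻¹ + γ * 1 = 0 := Ej
    have Cc : α * 1 + β * 0 + γ * 0 = 0 := El
    field_simp at B
    exact cramer3 _ _ _ _ _ _ _ _ _ α β γ
      (show u^2 * (v^2 * 0 - v^3 * 0) - u * (v * 0 - v^3 * 1) + 1 * (v * 0 - v^2 * 1) ≠ 0 by
        rw [show u^2 * (v^2 * 0 - v^3 * 0) - u * (v * 0 - v^3 * 1) + 1 * (v * 0 - v^2 * 1) = (v * ((u*v-1) * (v))) from by ring]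
        exact mul_ne_zero hv (mul_ne_zero h7 (hv)))
      (by first | linear_combination A | linear_combination -A) (by first | linear_combination v * B | linear_combination -B) (by first | linear_combination Cc | linear_combination -Cc)
  · -- (0, 3, 5)
    have A : α * u ^ 2 + β * u + γ * 1 = 0 := Ei
    have B : α * (v ^ 2)⁻¹ + β * v⁻¹ + γ * 1 = 0 := Ej
    have Cc : α * 0 + β * 1 + γ * 0 = 0 := El
    field_simp at B
    exact cramer3 _ _ _ _ _ _ _ _ _ α β γ
      (show u^2 * (v^2 * 0 - v^3 * 1) - u * (v * 0 - v^3 * 0) + 1 * (v * 1 - v^2 * 0) ≠ 0 by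
        rw [show u^2 * (v^2 * 0 - v^3 * 1) - u * (v * 0 - v^3 * 0) + 1 * (v * 1 - v^2 * 0) = -((u*v-1) * ((u*v+1) * (v))) from by ring]
        exact neg_ne_zero.mpr (mul_ne_zero h7 (mul_ne_zero h8 (hv))))
      (by first | linear_combination A | linear_combination -A) (by first | linear_combination v * B | linear_combination -B) (by first | linear_combination Cc | linear_combination -Cc)
  · -- (0, 4, 5)
    have A : α * u ^ 2 + β * u + γ * 1 = 0 := Ei
    have B : α * 1 + β * 0 + γ * 0 = 0 := Ej
    have Cc : α * 0 + β * 1 + γ * 0 = 0 := El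
    exact cramer3 _ _ _ _ _ _ _ _ _ α β γ
      (show u^2 * (0 * 0 - 0 * 1) - u * (1 * 0 - 0 * 0) + 1 * (1 * 1 - 0 * 0) ≠ 0 by
        rw [show u^2 * (0 * 0 - 0 * 1) - u * (1 * 0 - 0 * 0) + 1 * (1 * 1 - 0 * 0) = (1:k) from by ring]
        exact one_ne_zero)
      (by first | linear_combination A | linear_combination -A) (by first | linear_combination B | linear_combination -B) (by first | linear_combination Cc | linear_combination -Cc)
  · -- (1, 2, 3)
    have A : α * (u ^ 2)⁻¹ + β * u⁻¹ + γ * 1 = 0 := Ei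
    have B : α * v ^ 2 + β * v + γ * 1 = 0 := Ej
    have Cc : α * (v ^ 2)⁻¹ + β * v⁻¹ + γ * 1 = 0 := El
    field_simp at A Cc
    exact cramer3 _ _ _ _ _ _ _ _ _ α β γ
      (show u * (v * v^3 - 1 * v^2) - u^2 * (v^2 * v^3 - 1 * v) + u^3 * (v^2 * v^2 - v * v) ≠ 0 by
        rw [show u * (v * v^3 - 1 * v^2) - u^2 * (v^2 * v^3 - 1 * v) + u^3 * (v^2 * v^2 - v * v) = ((u-v) * ((u*v-1) * ((v^2-1) * (u * (v))))) from by ring]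
        exact mul_ne_zero h5 (mul_ne_zero h7 (mul_ne_zero h3 (mul_ne_zero hu (hv)))))
      (by first | linear_combination u * A | linear_combination -A) (by first | linear_combination B | linear_combination -B) (by first | linear_combination v * Cc | linear_combination -Cc)
  · -- (1, 2, 4)
    have A : α * (u ^ 2)⁻¹ + β * u⁻¹ + γ * 1 = 0 := Ei
    have B : α * v ^ 2 + β * v + γ * 1 = 0 := Ej
    have Cc : α * 1 + β * 0 + γ * 0 = 0 := El
    field_simp at A
    exact cramer3 _ _ _ _ _ _ _ _ _ α β γ
      (show u * (v * 0 - 1 * 0) - u^2 * (v^2 * 0 - 1 * 1) + u^3 * (v^2 * 0 - v * 1) ≠ 0 by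
        rw [show u * (v * 0 - 1 * 0) - u^2 * (v^2 * 0 - 1 * 1) + u^3 * (v^2 * 0 - v * 1) = -(u * ((u*v-1) * (u))) from by ring]
        exact neg_ne_zero.mpr (mul_ne_zero hu (mul_ne_zero h7 (hu))))
      (by first | linear_combination u * A | linear_combination -A) (by first | linear_combination B | linear_combination -B) (by first | linear_combination Cc | linear_combination -Cc)
  · -- (1, 2, 5)
    have A : α * (u ^ 2)⁻¹ + β * u⁻¹ + γ * 1 = 0 := Ei
    have B : α * v ^ 2 + β * v + γ * 1 = 0 := Ej
    have Cc : α * 0 + β * 1 + γ * 0 = 0 := El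
    field_simp at A
    exact cramer3 _ _ _ _ _ _ _ _ _ α β γ
      (show u * (v * 0 - 1 * 1) - u^2 * (v^2 * 0 - 1 * 0) + u^3 * (v^2 * 1 - v * 0) ≠ 0 by
        rw [show u * (v * 0 - 1 * 1) - u^2 * (v^2 * 0 - 1 * 0) + u^3 * (v^2 * 1 - v * 0) = ((u*v-1) * ((u*v+1) * (u))) from by ring]
        exact mul_ne_zero h7 (mul_ne_zero h8 (hu)))
      (by first | linear_combination u * A | linear_combination -A) (by first | linear_combination B | linear_combination -B) (by first | linear_combination Cc | linear_combination -Cc)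
  · -- (1, 3, 4)
    have A : α * (u ^ 2)⁻¹ + β * u⁻¹ + γ * 1 = 0 := Ei
    have B : α * (v ^ 2)⁻¹ + β * v⁻¹ + γ * 1 = 0 := Ej
    have Cc : α * 1 + β * 0 + γ * 0 = 0 := El
    field_simp at A B
    exact cramer3 _ _ _ _ _ _ _ _ _ α β γ
      (show u * (v^2 * 0 - v^3 * 0) - u^2 * (v * 0 - v^3 * 1) + u^3 * (v * 0 - v^2 * 1) ≠ 0 by
        rw [show u * (v^2 * 0 - v^3 * 0) - u^2 * (v * 0 - v^3 * 1) + u^3 * (v * 0 - v^2 * 1) = -(u * (v * ((u-v) * (u * (v))))) from by ring]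
        exact neg_ne_zero.mpr (mul_ne_zero hu (mul_ne_zero hv (mul_ne_zero h5 (mul_ne_zero hu (hv))))))
      (by first | linear_combination u * A | linear_combination -A) (by first | linear_combination v * B | linear_combination -B) (by first | linear_combination Cc | linear_combination -Cc)
  · -- (1, 3, 5)
    have A : α * (u ^ 2)⁻¹ + β * u⁻¹ + γ * 1 = 0 := Ei
    have B : α * (v ^ 2)⁻¹ + β * v⁻¹ + γ * 1 = 0 := Ej
    have Cc : α * 0 + β * 1 + γ * 0 = 0 := El
    field_simp at A B
    exact cramer3 _ _ _ _ _ _ _ _ _ α β γ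
      (show u * (v^2 * 0 - v^3 * 1) - u^2 * (v * 0 - v^3 * 0) + u^3 * (v * 1 - v^2 * 0) ≠ 0 by
        rw [show u * (v^2 * 0 - v^3 * 1) - u^2 * (v * 0 - v^3 * 0) + u^3 * (v * 1 - v^2 * 0) = ((u-v) * ((u+v) * (u * (v)))) from by ring]
        exact mul_ne_zero h5 (mul_ne_zero h6 (mul_ne_zero hu (hv))))
      (by first | linear_combination u * A | linear_combination -A) (by first | linear_combination v * B | linear_combination -B) (by first | linear_combination Cc | linear_combination -Cc)
  · -- (1, 4, 5)
    have A : α * (u ^ 2)⁻¹ + β * u⁻¹ + γ * 1 = 0 := Ei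
    have B : α * 1 + β * 0 + γ * 0 = 0 := Ej
    have Cc : α * 0 + β * 1 + γ * 0 = 0 := El
    field_simp at A
    exact cramer3 _ _ _ _ _ _ _ _ _ α β γ
      (show u * (0 * 0 - 0 * 1) - u^2 * (1 * 0 - 0 * 0) + u^3 * (1 * 1 - 0 * 0) ≠ 0 by
        rw [show u * (0 * 0 - 0 * 1) - u^2 * (1 * 0 - 0 * 0) + u^3 * (1 * 1 - 0 * 0) = (u * (u * (u))) from by ring]
        exact mul_ne_zero hu (mul_ne_zero hu (hu)))
      (by first | linear_combination u * A | linear_combination -A) (by first | linear_combination B | linear_combination -B) (by first | linear_combination Cc | linear_combination -Cc)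
  · -- (2, 3, 4)
    have A : α * v ^ 2 + β * v + γ * 1 = 0 := Ei
    have B : α * (v ^ 2)⁻¹ + β * v⁻¹ + γ * 1 = 0 := Ej
    have Cc : α * 1 + β * 0 + γ * 0 = 0 := El
    field_simp at B
    exact cramer3 _ _ _ _ _ _ _ _ _ α β γ
      (show v^2 * (v^2 * 0 - v^3 * 0) - v * (v * 0 - v^3 * 1) + 1 * (v * 0 - v^2 * 1) ≠ 0 by
        rw [show v^2 * (v^2 * 0 - v^3 * 0) - v * (v * 0 - v^3 * 1) + 1 * (v * 0 - v^2 * 1) = (v * ((v^2-1) * (v))) from by ring]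
        exact mul_ne_zero hv (mul_ne_zero h3 (hv)))
      (by first | linear_combination A | linear_combination -A) (by first | linear_combination v * B | linear_combination -B) (by first | linear_combination Cc | linear_combination -Cc)
  · -- (2, 3, 5)
    have A : α * v ^ 2 + β * v + γ * 1 = 0 := Ei
    have B : α * (v ^ 2)⁻¹ + β * v⁻¹ + γ * 1 = 0 := Ej
    have Cc : α * 0 + β * 1 + γ * 0 = 0 := El
    field_simp at B
    exact cramer3 _ _ _ _ _ _ _ _ _ α β γ
      (show v^2 * (v^2 * 0 - v^3 * 1) - v * (v * 0 - v^3 * 0) + 1 * (v * 1 - v^2 * 0) ≠ 0 by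
        rw [show v^2 * (v^2 * 0 - v^3 * 1) - v * (v * 0 - v^3 * 0) + 1 * (v * 1 - v^2 * 0) = -((v^2-1) * ((v^2+1) * (v))) from by ring]
        exact neg_ne_zero.mpr (mul_ne_zero h3 (mul_ne_zero h4 (hv))))
      (by first | linear_combination A | linear_combination -A) (by first | linear_combination v * B | linear_combination -B) (by first | linear_combination Cc | linear_combination -Cc)
  · -- (2, 4, 5)
    have A : α * v ^ 2 + β * v + γ * 1 = 0 := Ei
    have B : α * 1 + β * 0 + γ * 0 = 0 := Ej
    have Cc : α * 0 + β * 1 + γ * 0 = 0 := El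
    exact cramer3 _ _ _ _ _ _ _ _ _ α β γ
      (show v^2 * (0 * 0 - 0 * 1) - v * (1 * 0 - 0 * 0) + 1 * (1 * 1 - 0 * 0) ≠ 0 by
        rw [show v^2 * (0 * 0 - 0 * 1) - v * (1 * 0 - 0 * 0) + 1 * (1 * 1 - 0 * 0) = (1:k) from by ring]
        exact one_ne_zero)
      (by first | linear_combination A | linear_combination -A) (by first | linear_combination B | linear_combination -B) (by first | linear_combination Cc | linear_combination -Cc)
  · -- (3, 4, 5)
    have A : α * (v ^ 2)⁻¹ + β * v⁻¹ + γ * 1 = 0 := Ei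
    have B : α * 1 + β * 0 + γ * 0 = 0 := Ej
    have Cc : α * 0 + β * 1 + γ * 0 = 0 := El
    field_simp at A
    exact cramer3 _ _ _ _ _ _ _ _ _ α β γ
      (show v * (0 * 0 - 0 * 1) - v^2 * (1 * 0 - 0 * 0) + v^3 * (1 * 1 - 0 * 0) ≠ 0 by
        rw [show v * (0 * 0 - 0 * 1) - v^2 * (1 * 0 - 0 * 0) + v^3 * (1 * 1 - 0 * 0) = (v * (v * (v))) from by ring]
        exact mul_ne_zero hv (mul_ne_zero hv (hv)))
      (by first | linear_combination v * A | linear_combination -A) (by first | linear_combination B | linear_combination -B) (by first | linear_combination Cc | linear_combination -Cc)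


theorem keyDist {k : Type*} [Field k] (u v : k) (hu : u ≠ 0) (hv : v ≠ 0)
    (h1 : u ^ 2 - 1 ≠ 0) (h3 : v ^ 2 - 1 ≠ 0) (h5 : u - v ≠ 0) (h7 : u * v - 1 ≠ 0) :
    ∀ i j : Fin 6, i ≠ j → ¬∃ c : k, c ≠ 0 ∧ sixTriples u v j = c • sixTriples u v i := by
  intro i j hij hex
  obtain ⟨c, hc, hP⟩ := hex
  have e0 := congrFun hP 0
  have e1 := congrFun hP 1
  have e2 := congrFun hP 2
  fin_cases i <;> fin_cases j <;> first | exact hij rfl | skip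
  · -- i=0, j=1
    have E2 : ((1):k) = c * 1 := e2
    have E1 : ((u⁻¹):k) = c * u := e1
    have hc1 : c = 1 := by first | linear_combination E2 | linear_combination -E2
    subst hc1
    apply h1
    field_simp at E1
    first | linear_combination E1 | linear_combination -E1
  · -- i=0, j=2
    have E2 : ((1):k) = c * 1 := e2
    have E1 : ((v):k) = c * u := e1
    have hc1 : c = 1 := by first | linear_combination E2 | linear_combination -E2
    subst hc1
    apply h5
    field_simp at E1
    first | linear_combination E1 | linear_combination -E1
  · -- i=0, j=3
    have E2 : ((1):k) = c * 1 := e2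
    have E1 : ((v⁻¹):k) = c * u := e1
    have hc1 : c = 1 := by first | linear_combination E2 | linear_combination -E2
    subst hc1
    apply h7
    field_simp at E1
    first | linear_combination E1 | linear_combination -E1
  · -- i=0, j=4
    have E2 : ((0):k) = c * 1 := e2
    exact hc (by first | linear_combination E2 | linear_combination -E2)
  · -- i=0, j=5
    have E2 : ((0):k) = c * 1 := e2
    exact hc (by first | linear_combination E2 | linear_combination -E2)
  · -- i=1, j=0
    have E2 : ((1):k) = c * 1 := e2
    have E1 : ((u):k) = c * u⁻¹ := e1
    have hc1 : c = 1 := by first | linear_combination E2 | linear_combination -E2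
    subst hc1
    apply h1
    field_simp at E1
    first | linear_combination E1 | linear_combination -E1
  · -- i=1, j=2
    have E2 : ((1):k) = c * 1 := e2
    have E1 : ((v):k) = c * u⁻¹ := e1
    have hc1 : c = 1 := by first | linear_combination E2 | linear_combination -E2
    subst hc1
    apply h7
    field_simp at E1
    first | linear_combination E1 | linear_combination -E1
  · -- i=1, j=3
    have E2 : ((1):k) = c * 1 := e2
    have E1 : ((v⁻¹):k) = c * u⁻¹ := e1
    have hc1 : c = 1 := by first | linear_combination E2 | linear_combination -E2
    subst hc1
    apply h5
    field_simp at E1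
    first | linear_combination E1 | linear_combination -E1
  · -- i=1, j=4
    have E2 : ((0):k) = c * 1 := e2
    exact hc (by first | linear_combination E2 | linear_combination -E2)
  · -- i=1, j=5
    have E2 : ((0):k) = c * 1 := e2
    exact hc (by first | linear_combination E2 | linear_combination -E2)
  · -- i=2, j=0
    have E2 : ((1):k) = c * 1 := e2
    have E1 : ((u):k) = c * v := e1
    have hc1 : c = 1 := by first | linear_combination E2 | linear_combination -E2
    subst hc1
    apply h5
    field_simp at E1
    first | linear_combination E1 | linear_combination -E1
  · -- i=2, j=1
    have E2 : ((1):k) = c * 1 := e2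
    have E1 : ((u⁻¹):k) = c * v := e1
    have hc1 : c = 1 := by first | linear_combination E2 | linear_combination -E2
    subst hc1
    apply h7
    field_simp at E1
    first | linear_combination E1 | linear_combination -E1
  · -- i=2, j=3
    have E2 : ((1):k) = c * 1 := e2
    have E1 : ((v⁻¹):k) = c * v := e1
    have hc1 : c = 1 := by first | linear_combination E2 | linear_combination -E2
    subst hc1
    apply h3
    field_simp at E1
    first | linear_combination E1 | linear_combination -E1
  · -- i=2, j=4
    have E2 : ((0):k) = c * 1 := e2
    exact hc (by first | linear_combination E2 | linear_combination -E2)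
  · -- i=2, j=5
    have E2 : ((0):k) = c * 1 := e2
    exact hc (by first | linear_combination E2 | linear_combination -E2)
  · -- i=3, j=0
    have E2 : ((1):k) = c * 1 := e2
    have E1 : ((u):k) = c * v⁻¹ := e1
    have hc1 : c = 1 := by first | linear_combination E2 | linear_combination -E2
    subst hc1
    apply h7
    field_simp at E1
    first | linear_combination E1 | linear_combination -E1
  · -- i=3, j=1
    have E2 : ((1):k) = c * 1 := e2
    have E1 : ((u⁻¹):k) = c * v⁻¹ := e1
    have hc1 : c = 1 := by first | linear_combination E2 | linear_combination -E2
    subst hc1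
    apply h5
    field_simp at E1
    first | linear_combination E1 | linear_combination -E1
  · -- i=3, j=2
    have E2 : ((1):k) = c * 1 := e2
    have E1 : ((v):k) = c * v⁻¹ := e1
    have hc1 : c = 1 := by first | linear_combination E2 | linear_combination -E2
    subst hc1
    apply h3
    field_simp at E1
    first | linear_combination E1 | linear_combination -E1
  · -- i=3, j=4
    have E2 : ((0):k) = c * 1 := e2
    exact hc (by first | linear_combination E2 | linear_combination -E2)
  · -- i=3, j=5
    have E2 : ((0):k) = c * 1 := e2
    exact hc (by first | linear_combination E2 | linear_combination -E2)
  · -- i=4, j=0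
    have E1 : ((u):k) = c * 0 := e1
    exact (hu) (by first | linear_combination E1 | linear_combination -E1)
  · -- i=4, j=1
    have E1 : ((u⁻¹):k) = c * 0 := e1
    exact (inv_ne_zero hu) (by first | linear_combination E1 | linear_combination -E1)
  · -- i=4, j=2
    have E1 : ((v):k) = c * 0 := e1
    exact (hv) (by first | linear_combination E1 | linear_combination -E1)
  · -- i=4, j=3
    have E1 : ((v⁻¹):k) = c * 0 := e1
    exact (inv_ne_zero hv) (by first | linear_combination E1 | linear_combination -E1)
  · -- i=4, j=5
    have E0 : ((0):k) = c * 1 := e0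
    exact hc (by first | linear_combination E0 | linear_combination -E0)
  · -- i=5, j=0
    have E0 : ((u ^ 2):k) = c * 0 := e0
    exact (pow_ne_zero 2 hu) (by first | linear_combination E0 | linear_combination -E0)
  · -- i=5, j=1
    have E0 : (((u ^ 2)⁻¹):k) = c * 0 := e0
    exact (inv_ne_zero (pow_ne_zero 2 hu)) (by first | linear_combination E0 | linear_combination -E0)
  · -- i=5, j=2
    have E0 : ((v ^ 2):k) = c * 0 := e0
    exact (pow_ne_zero 2 hv) (by first | linear_combination E0 | linear_combination -E0)
  · -- i=5, j=3
    have E0 : (((v ^ 2)⁻¹):k) = c * 0 := e0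
    exact (inv_ne_zero (pow_ne_zero 2 hv)) (by first | linear_combination E0 | linear_combination -E0)
  · -- i=5, j=4
    have E0 : ((1):k) = c * 0 := e0
    exact one_ne_zero (by first | linear_combination E0 | linear_combination -E0)


theorem keyConic {k : Type*} [Field k] (u v : k) (hu : u ≠ 0) (hv : v ≠ 0)
    (h1 : u ^ 2 - 1 ≠ 0) (h3 : v ^ 2 - 1 ≠ 0) (h5 : u - v ≠ 0) (h7 : u * v - 1 ≠ 0) :
    ¬∃ a b c d e f : k, (a, b, c, d, e, f) ≠ (0, 0, 0, 0, 0, 0) ∧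
      ∀ m : Fin 6,
        a * sixTriples u v m 0 ^ 2 + b * sixTriples u v m 1 ^ 2 + c * sixTriples u v m 2 ^ 2 +
          d * (sixTriples u v m 0 * sixTriples u v m 1) +
          e * (sixTriples u v m 0 * sixTriples u v m 2) +
          f * (sixTriples u v m 1 * sixTriples u v m 2) = 0 := by
  have neuu : u ≠ u⁻¹ := by
    intro h; apply h1
    have h' := congrArg (· * u) h
    simp only [inv_mul_cancel₀ hu] at h'
    linear_combination h'
  have nevv : v ≠ v⁻¹ := by
    intro h; apply h3
    have h' := congrArg (· * v) h
    simp only [inv_mul_cancel₀ hv] at h'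
    linear_combination h'
  have neuv : u ≠ v := fun h => h5 (by linear_combination h)
  have neuvi : u ≠ v⁻¹ := by
    intro h; apply h7
    have h' := congrArg (· * v) h
    simp only [inv_mul_cancel₀ hv] at h'
    linear_combination h'
  have neuiv : u⁻¹ ≠ v := by
    intro h; apply h7
    have h' := congrArg (· * u) h.symm
    simp only [inv_mul_cancel₀ hu] at h'
    linear_combination h'
  have neuivi : u⁻¹ ≠ v⁻¹ := fun h => neuv (inv_injective h)
  rintro ⟨a, b, c, d, e, f, hne, hval⟩
  have A0 : a * (u ^ 2) ^ 2 + b * u ^ 2 + c * 1 ^ 2 + d * (u ^ 2 * u) + e * (u ^ 2 * 1)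
      + f * (u * 1) = 0 := hval 0
  have A1 : a * ((u ^ 2)⁻¹) ^ 2 + b * (u⁻¹) ^ 2 + c * 1 ^ 2 + d * ((u ^ 2)⁻¹ * u⁻¹)
      + e * ((u ^ 2)⁻¹ * 1) + f * (u⁻¹ * 1) = 0 := hval 1
  have A2 : a * (v ^ 2) ^ 2 + b * v ^ 2 + c * 1 ^ 2 + d * (v ^ 2 * v) + e * (v ^ 2 * 1)
      + f * (v * 1) = 0 := hval 2
  have A3 : a * ((v ^ 2)⁻¹) ^ 2 + b * (v⁻¹) ^ 2 + c * 1 ^ 2 + d * ((v ^ 2)⁻¹ * v⁻¹)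
      + e * ((v ^ 2)⁻¹ * 1) + f * (v⁻¹ * 1) = 0 := hval 3
  have A4 : a * 1 ^ 2 + b * 0 ^ 2 + c * 0 ^ 2 + d * (1 * 0) + e * (1 * 0) + f * (0 * 0) = 0 :=
    hval 4
  have A5 : a * 0 ^ 2 + b * 1 ^ 2 + c * 0 ^ 2 + d * (0 * 1) + e * (0 * 0) + f * (1 * 0) = 0 :=
    hval 5
  have ha : a = 0 := by linear_combination A4
  have hb : b = 0 := by linear_combination A5
  subst ha hb
  set q : Polynomial k := Polynomial.C c + Polynomial.C f * Polynomial.X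
      + Polynomial.C e * Polynomial.X ^ 2 + Polynomial.C d * Polynomial.X ^ 3 with hqdef
  have pu : q.eval u = 0 := by
    simp only [hqdef, Polynomial.eval_add, Polynomial.eval_mul, Polynomial.eval_pow,
      Polynomial.eval_C, Polynomial.eval_X]
    linear_combination A0
  have pv : q.eval v = 0 := by
    simp only [hqdef, Polynomial.eval_add, Polynomial.eval_mul, Polynomial.eval_pow,
      Polynomial.eval_C, Polynomial.eval_X]
    linear_combination A2
  have pui : q.eval u⁻¹ = 0 := by
    field_simp at A1
    simp only [hqdef, Polynomial.eval_add, Polynomial.eval_mul, Polynomial.eval_pow,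
      Polynomial.eval_C, Polynomial.eval_X]
    field_simp
    have A1' : d + u * e + u ^ 2 * f + u ^ 3 * c = 0 :=
      mul_left_cancel₀ hu (by linear_combination A1)
    first
      | linear_combination A1 | linear_combination -A1
      | linear_combination u * A1 | linear_combination -(u * A1)
      | linear_combination u ^ 2 * A1 | linear_combination -(u ^ 2 * A1)
      | linear_combination u ^ 3 * A1 | linear_combination -(u ^ 3 * A1)
      | linear_combination A1'
  have pvi : q.eval v⁻¹ = 0 := by
    field_simp at A3
    simp only [hqdef, Polynomial.eval_add, Polynomial.eval_mul, Polynomial.eval_pow,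
      Polynomial.eval_C, Polynomial.eval_X]
    field_simp
    have A3' : d + v * e + v ^ 2 * f + v ^ 3 * c = 0 :=
      mul_left_cancel₀ hv (by linear_combination A3)
    first
      | linear_combination A3 | linear_combination -A3
      | linear_combination v * A3 | linear_combination -(v * A3)
      | linear_combination v ^ 2 * A3 | linear_combination -(v ^ 2 * A3)
      | linear_combination v ^ 3 * A3 | linear_combination -(v ^ 3 * A3)
      | linear_combination A3'
  have hinj : Function.Injective (![u, u⁻¹, v, v⁻¹] : Fin 4 → k) := by
    intro s t hst
    fin_cases s <;> fin_cases t <;>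
      first
        | rfl
        | exact absurd hst neuu | exact absurd hst.symm neuu
        | exact absurd hst neuv | exact absurd hst.symm neuv
        | exact absurd hst neuvi | exact absurd hst.symm neuvi
        | exact absurd hst neuiv | exact absurd hst.symm neuiv
        | exact absurd hst neuivi | exact absurd hst.symm neuivi
        | exact absurd hst nevv | exact absurd hst.symm nevv
  have hq0 : q = 0 := by
    apply Polynomial.eq_zero_of_natDegree_lt_card_of_eval_eq_zero q hinj
    · intro t
      fin_cases t
      · exact pu
      · exact pui
      · exact pv
      · exact pvi
    · have hdeg : q.natDegree ≤ 3 := by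
        simp only [hqdef]
        compute_degree
      simpa using lt_of_le_of_lt hdeg (by norm_num)
  have hcc : c = 0 := by
    have h' := congrArg (fun p => Polynomial.coeff p 0) hq0
    simpa [hqdef] using h'
  have hff : f = 0 := by
    have h' := congrArg (fun p => Polynomial.coeff p 1) hq0
    simpa [hqdef] using h'
  have hee : e = 0 := by
    have h' := congrArg (fun p => Polynomial.coeff p 2) hq0
    simpa [hqdef] using h'
  have hdd : d = 0 := by
    have h' := congrArg (fun p => Polynomial.coeff p 3) hq0
    simpa [hqdef] using h'
  exact hne (by simp [hcc, hff, hee, hdd])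

/-- Let `k` be a field, `u, v ∈ k` nonzero, and set
`f(u,v) = (u⁴−1)(v⁴−1)(u²−v²)(u²v²−1)`.  The six points of `ℙ²(k)` with coordinate triples
`(u²,u,1), (u⁻²,u⁻¹,1), (v²,v,1), (v⁻²,v⁻¹,1), (1,0,0), (0,1,0)` are in general position if
and only if `f(u,v) ≠ 0`. -/
theorem generalPosition_iff {k : Type*} [Field k] (u v : k) (hu : u ≠ 0) (hv : v ≠ 0) :
    InGeneralPosition6 (sixTriples u v) ↔
      (u ^ 4 - 1) * (v ^ 4 - 1) * (u ^ 2 - v ^ 2) * (u ^ 2 * v ^ 2 - 1) ≠ 0 := by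
  
  constructor
  · rintro ⟨hdist, hline, -⟩ hf0
    rcases mul_eq_zero.mp hf0 with h' | hD
    · rcases mul_eq_zero.mp h' with h'' | hC
      · rcases mul_eq_zero.mp h'' with hA | hB
        · rcases mul_eq_zero.mp (show (u ^ 2 - 1) * (u ^ 2 + 1) = 0 from by
            linear_combination hA) with h | h
          · refine hdist 0 1 (by decide) ⟨1, one_ne_zero, ?_⟩
            rw [one_smul]
            funext w
            fin_cases w
            · show ((u ^ 2)⁻¹ : k) = u ^ 2
              rw [show (u ^ 2 : k) = 1 from by linear_combination h, inv_one]
            · show (u⁻¹ : k) = u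
              field_simp
              first | linear_combination h | linear_combination -h
            · rfl
          · refine hline 0 1 5 (by decide) (by decide) (by decide)
              ⟨1, 0, 1, by simp, ?_⟩
            intro m hm
            simp only [Set.mem_insert_iff, Set.mem_singleton_iff] at hm
            rcases hm with rfl | rfl | rfl
            · show (1 : k) * u ^ 2 + 0 * u + 1 * 1 = 0
              linear_combination h
            · show (1 : k) * (u ^ 2)⁻¹ + 0 * u⁻¹ + 1 * 1 = 0
              rw [show (u ^ 2 : k) = -1 from by linear_combination h]
              norm_num
            · show (1 : k) * 0 + 0 * 1 + 1 * 0 = 0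
              ring
        · rcases mul_eq_zero.mp (show (v ^ 2 - 1) * (v ^ 2 + 1) = 0 from by
            linear_combination hB) with h | h
          · refine hdist 2 3 (by decide) ⟨1, one_ne_zero, ?_⟩
            rw [one_smul]
            funext w
            fin_cases w
            · show ((v ^ 2)⁻¹ : k) = v ^ 2
              rw [show (v ^ 2 : k) = 1 from by linear_combination h, inv_one]
            · show (v⁻¹ : k) = v
              field_simp
              first | linear_combination h | linear_combination -h
            · rfl
          · refine hline 2 3 5 (by decide) (by decide) (by decide)
              ⟨1, 0, 1, by simp, ?_⟩
            intro m hm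
            simp only [Set.mem_insert_iff, Set.mem_singleton_iff] at hm
            rcases hm with rfl | rfl | rfl
            · show (1 : k) * v ^ 2 + 0 * v + 1 * 1 = 0
              linear_combination h
            · show (1 : k) * (v ^ 2)⁻¹ + 0 * v⁻¹ + 1 * 1 = 0
              rw [show (v ^ 2 : k) = -1 from by linear_combination h]
              norm_num
            · show (1 : k) * 0 + 0 * 1 + 1 * 0 = 0
              ring
      · rcases mul_eq_zero.mp (show (u - v) * (u + v) = 0 from by
          linear_combination hC) with h | h
        · refine hdist 0 2 (by decide) ⟨1, one_ne_zero, ?_⟩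
          rw [one_smul]
          funext w
          fin_cases w
          · show (v ^ 2 : k) = u ^ 2
            linear_combination (-(u + v)) * h
          · show (v : k) = u
            linear_combination -h
          · rfl
        · refine hline 0 2 5 (by decide) (by decide) (by decide)
            ⟨1, 0, -(v ^ 2), by simp, ?_⟩
          intro m hm
          simp only [Set.mem_insert_iff, Set.mem_singleton_iff] at hm
          rcases hm with rfl | rfl | rfl
          · show (1 : k) * u ^ 2 + 0 * u + -(v ^ 2) * 1 = 0
            linear_combination (u - v) * h
          · show (1 : k) * v ^ 2 + 0 * v + -(v ^ 2) * 1 = 0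
            ring
          · show (1 : k) * 0 + 0 * 1 + -(v ^ 2) * 0 = 0
            ring
    · rcases mul_eq_zero.mp (show (u * v - 1) * (u * v + 1) = 0 from by
        linear_combination hD) with h | h
      · refine hdist 1 2 (by decide) ⟨1, one_ne_zero, ?_⟩
        rw [one_smul]
        funext w
        fin_cases w
        · show (v ^ 2 : k) = (u ^ 2)⁻¹
          field_simp
          first | linear_combination (u * v + 1) * h | linear_combination (-(u * v + 1)) * h
        · show (v : k) = u⁻¹
          field_simp
          first | linear_combination h | linear_combination -h
        · rfl
      · refine hline 1 2 5 (by decide) (by decide) (by decide)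
          ⟨1, 0, -(v ^ 2), by simp, ?_⟩
        intro m hm
        simp only [Set.mem_insert_iff, Set.mem_singleton_iff] at hm
        rcases hm with rfl | rfl | rfl
        · show (1 : k) * (u ^ 2)⁻¹ + 0 * u⁻¹ + -(v ^ 2) * 1 = 0
          field_simp
          first | linear_combination (u * v - 1) * h | linear_combination (-(u * v - 1)) * h
        · show (1 : k) * v ^ 2 + 0 * v + -(v ^ 2) * 1 = 0
          ring
        · show (1 : k) * 0 + 0 * 1 + -(v ^ 2) * 0 = 0
          ring
  · intro hf
    have hA : u ^ 4 - 1 ≠ 0 := fun h => hf (by rw [h]; ring)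
    have hB : v ^ 4 - 1 ≠ 0 := fun h => hf (by rw [h]; ring)
    have hC : u ^ 2 - v ^ 2 ≠ 0 := fun h => hf (by rw [h]; ring)
    have hD : u ^ 2 * v ^ 2 - 1 ≠ 0 := fun h => hf (by rw [h]; ring)
    have h1 : u ^ 2 - 1 ≠ 0 := fun h => hA (by linear_combination (u ^ 2 + 1) * h)
    have h2 : u ^ 2 + 1 ≠ 0 := fun h => hA (by linear_combination (u ^ 2 - 1) * h)
    have h3 : v ^ 2 - 1 ≠ 0 := fun h => hB (by linear_combination (v ^ 2 + 1) * h)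
    have h4 : v ^ 2 + 1 ≠ 0 := fun h => hB (by linear_combination (v ^ 2 - 1) * h)
    have h5 : u - v ≠ 0 := fun h => hC (by linear_combination (u + v) * h)
    have h6 : u + v ≠ 0 := fun h => hC (by linear_combination (u - v) * h)
    have h7 : u * v - 1 ≠ 0 := fun h => hD (by linear_combination (u * v + 1) * h)
    have h8 : u * v + 1 ≠ 0 := fun h => hD (by linear_combination (u * v - 1) * h)
    refine ⟨keyDist u v hu hv h1 h3 h5 h7, ?_, keyConic u v hu hv h1 h3 h5 h7⟩
    intro i j l hij hil hjl hex
    obtain ⟨α, β, γ, hne, hval⟩ := hex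
    apply hne
    have Ei := hval i (by simp)
    have Ej := hval j (by simp)
    have El := hval l (by simp)
    have key := keyLine u v hu hv h1 h2 h3 h4 h5 h6 h7 h8 α β γ
    obtain ⟨ha', hb', hg'⟩ : α = 0 ∧ β = 0 ∧ γ = 0 := by
      rcases Ne.lt_or_gt hij with o1 | o1 <;> rcases Ne.lt_or_gt hil with o2 | o2 <;>
        rcases Ne.lt_or_gt hjl with o3 | o3
      · exact key i j l o1 o3 Ei Ej El
      · exact key i l j o2 o3 Ei El Ej
      · exact absurd o2 (not_lt.mpr (o1.trans o3).le)
      · exact key l i j o2 o1 El Ei Ej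
      · exact key j i l o1 o2 Ej Ei El
      · exact absurd o2 (not_lt.mpr (o3.trans o1).le)
      · exact key j l i o3 o2 Ej El Ei
      · exact key l j i o3 o1 El Ej Ei
    rw [ha', hb', hg']
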